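/- arXiv:2501.01783 — 2 statements merged into one kernel-verified Lean document; each statement's English description precedes it below -/
import Mathlib

section
/- Let D ∈ ℕ, K, τ₁ > 0, 0 < τ_lo ≤ τ_hi, and let p₀ be a probability density on ℝ^D supported on [−1,1]^D with τ₁ ≤ p₀(x) ≤ K for all x ∈ [−1,1]^D; let α, μ_t, σ_t, p_t be as in the forward process. Then there exists a constant C > 0 depending only on (D, K, τ₁) such that for every x ∈ ℝ^D and every t > 0, C^{−1} exp( −D ((‖x‖_∞ − μ_t) ∨ 0)² / σ_t² ) ≤ p_t(x) ≤ C exp( −((‖x‖_∞ − μ_t) ∨ 0)² / (2σ_t²) ). -/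
open MeasureTheory
open scoped BigOperators ENNReal NNReal

noncomputable section

namespace DMpaper

attribute [local instance] Classical.propDecidable

/-- The cube `[-1,1]^D`. -/
def cube (D : ℕ) : Set (Fin D → ℝ) := Set.Icc (-1) 1

/-- Density of the Gaussian `N(0, σ² I_D)` on `ℝ^D`. -/
def gaussD (D : ℕ) (σ : ℝ) (x : Fin D → ℝ) : ℝ :=
  (2 * Real.pi * σ ^ 2) ^ (-(D : ℝ) / 2) * Real.exp (-(∑ i, x i ^ 2) / (2 * σ ^ 2))

/-- `μ_t = exp (-∫_0^t α_s ds)` for the forward process. -/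
def muT (α : ℝ → ℝ) (t : ℝ) : ℝ := Real.exp (-∫ s in Set.Ioc (0 : ℝ) t, α s)

/-- `σ_t = √(1 - μ_t²)` for the forward process. -/
def sigmaT (α : ℝ → ℝ) (t : ℝ) : ℝ := Real.sqrt (1 - muT α t ^ 2)

/-- The marginal density `p_t(x) = ∫_{[-1,1]^D} p₀(y) φ_{σ_t}(x - μ_t y) dy`
of the forward process. -/
def fwdDen (D : ℕ) (α : ℝ → ℝ) (p₀ : (Fin D → ℝ) → ℝ) (t : ℝ) (x : Fin D → ℝ) : ℝ :=
  ∫ y in cube D, p₀ y * gaussD D (sigmaT α t) (x - muT α t • y)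

/-- `p₀` is a probability density supported on `[-1,1]^D`, and `α` is Borel measurable
with values in `[τlo, τhi]` on `[0,∞)`. -/
def ForwardHyp (D : ℕ) (τlo τhi : ℝ) (α : ℝ → ℝ) (p₀ : (Fin D → ℝ) → ℝ) : Prop :=
  Measurable p₀ ∧ (∀ x, 0 ≤ p₀ x) ∧ (∀ x, x ∉ cube D → p₀ x = 0) ∧ (∫ x, p₀ x) = 1 ∧
    Measurable α ∧ ∀ t, 0 ≤ t → τlo ≤ α t ∧ α t ≤ τhi

/-- one-dimensional Gaussian density -/
def g1 (σ u : ℝ) : ℝ := (2 * Real.pi * σ ^ 2) ^ (-(1:ℝ)/2) * Real.exp (-u ^ 2 / (2 * σ ^ 2))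

lemma g1_pos {σ : ℝ} (hσ : 0 < σ) (u : ℝ) : 0 < g1 σ u := by
  unfold g1
  have h : (0:ℝ) < 2 * Real.pi * σ ^ 2 := by positivity
  positivity

lemma g1_continuous (σ : ℝ) : Continuous (g1 σ) := by
  unfold g1
  fun_prop

lemma g1_even (σ u : ℝ) : g1 σ (-u) = g1 σ u := by simp [g1]

lemma g1_eq (σ : ℝ) (hσ : 0 < σ) (u : ℝ) :
    g1 σ u = (2 * Real.pi * σ ^ 2) ^ (-(1:ℝ)/2) * Real.exp (-(2 * σ ^ 2)⁻¹ * u ^ 2) := by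
  unfold g1; congr 1; congr 1; field_simp

lemma g1_integrable {σ : ℝ} (hσ : 0 < σ) : Integrable (g1 σ) := by
  have hb : 0 < (2 * σ ^ 2)⁻¹ := by positivity
  have h := (integrable_exp_neg_mul_sq hb).const_mul ((2 * Real.pi * σ ^ 2) ^ (-(1:ℝ)/2))
  exact h.congr (by
    refine Filter.Eventually.of_forall fun u => ?_
    rw [g1_eq σ hσ u])

lemma integral_g1 {σ : ℝ} (hσ : 0 < σ) : ∫ u, g1 σ u = 1 := by
  have hb : 0 < (2 * σ ^ 2)⁻¹ := by positivity
  have h2 : (0:ℝ) < 2 * Real.pi * σ ^ 2 := by positivity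
  have h1 : ∫ u : ℝ, Real.exp (-(2 * σ ^ 2)⁻¹ * u ^ 2)
      = Real.sqrt (Real.pi / (2 * σ ^ 2)⁻¹) := integral_gaussian _
  have heq : ∫ u, g1 σ u = (2 * Real.pi * σ ^ 2) ^ (-(1:ℝ)/2)
      * ∫ u : ℝ, Real.exp (-(2 * σ ^ 2)⁻¹ * u ^ 2) := by
    rw [← integral_const_mul]
    exact integral_congr_ae (Filter.Eventually.of_forall fun u => g1_eq σ hσ u)
  rw [heq, h1]
  have h3 : Real.pi / (2 * σ ^ 2)⁻¹ = 2 * Real.pi * σ ^ 2 := by field_simp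
  rw [h3]
  have h4 : (2 * Real.pi * σ ^ 2) ^ (-(1:ℝ)/2) = (Real.sqrt (2 * Real.pi * σ ^ 2))⁻¹ := by
    rw [Real.sqrt_eq_rpow, ← Real.rpow_neg h2.le]
    norm_num
  rw [h4]
  exact inv_mul_cancel₀ (ne_of_gt (Real.sqrt_pos.2 h2))

lemma setIntegral_g1_le_one {σ : ℝ} (hσ : 0 < σ) (s : Set ℝ) :
    ∫ u in s, g1 σ u ≤ 1 := by
  rw [← integral_g1 hσ]
  exact setIntegral_le_integral (g1_integrable hσ)
    (Filter.Eventually.of_forall fun u => (g1_pos hσ u).le)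

lemma g1_tail {σ : ℝ} (hσ : 0 < σ) {m a : ℝ} (hm : 0 ≤ m) (ha : m ≤ a) (b : ℝ) :
    ∫ z in Set.Ioc a b, g1 σ z ≤ Real.exp (-m ^ 2 / (2 * σ ^ 2)) := by
  have hint1 : IntegrableOn (g1 σ) (Set.Ioc a b) := (g1_integrable hσ).integrableOn
  have hshift : Integrable (fun z => g1 σ (z - m)) := (g1_integrable hσ).comp_sub_right m
  have key : ∀ z ∈ Set.Ioc a b, g1 σ z ≤ Real.exp (-m ^ 2 / (2 * σ ^ 2)) * g1 σ (z - m) := by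
    intro z hz
    have hz' : m ≤ z := le_trans ha hz.1.le
    unfold g1
    rw [mul_left_comm, ← Real.exp_add, ← add_div]
    refine mul_le_mul_of_nonneg_left (Real.exp_le_exp.2 ?_) (by positivity)
    rw [div_le_div_iff_of_pos_right (by positivity : (0:ℝ) < 2 * σ ^ 2)]
    nlinarith [mul_nonneg hm (sub_nonneg.2 hz')]
  calc ∫ z in Set.Ioc a b, g1 σ z
      ≤ ∫ z in Set.Ioc a b, Real.exp (-m ^ 2 / (2 * σ ^ 2)) * g1 σ (z - m) :=
        setIntegral_mono_on hint1 (hshift.const_mul _).integrableOn measurableSet_Ioc key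
    _ = Real.exp (-m ^ 2 / (2 * σ ^ 2)) * ∫ z in Set.Ioc a b, g1 σ (z - m) := by
        rw [integral_const_mul]
    _ ≤ Real.exp (-m ^ 2 / (2 * σ ^ 2)) * 1 := by
        refine mul_le_mul_of_nonneg_left ?_ (Real.exp_pos _).le
        have : ∫ z in Set.Ioc a b, g1 σ (z - m) ≤ ∫ z, g1 σ (z - m) :=
          setIntegral_le_integral hshift
            (Filter.Eventually.of_forall fun z => (g1_pos hσ _).le)
        refine this.trans ?_
        rw [integral_sub_right_eq_self (g1 σ) m, integral_g1 hσ]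
    _ = Real.exp (-m ^ 2 / (2 * σ ^ 2)) := mul_one _


/-- the basic coordinate integral -/
def J (σ μ a : ℝ) : ℝ := ∫ u in Set.Icc (-1:ℝ) 1, g1 σ (a - μ * u)

lemma J_nonneg {σ : ℝ} (hσ : 0 < σ) (μ a : ℝ) : 0 ≤ J σ μ a :=
  setIntegral_nonneg measurableSet_Icc fun u _ => (g1_pos hσ _).le

lemma J_eq {σ : ℝ} (μ a : ℝ) (hμ : 0 < μ) :
    J σ μ a = μ⁻¹ * ∫ z in Set.Ioc (a - μ) (a + μ), g1 σ z := by
  unfold J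
  rw [integral_Icc_eq_integral_Ioc]
  have h1 : ∫ u in Set.Ioc (-1:ℝ) 1, g1 σ (a - μ * u)
      = ∫ u in (-1:ℝ)..1, g1 σ (a - μ * u) := by
    rw [intervalIntegral.integral_of_le (by norm_num : (-1:ℝ) ≤ 1)]
  rw [h1, intervalIntegral.integral_comp_sub_mul (g1 σ) (ne_of_gt hμ) a]
  have h2 : a - μ * 1 = a - μ := by ring
  have h3 : a - μ * (-1) = a + μ := by ring
  rw [h2, h3, intervalIntegral.integral_of_le (by linarith : a - μ ≤ a + μ)]
  simp [smul_eq_mul]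

lemma J_le {σ : ℝ} (hσ : 0 < σ) {μ : ℝ} (hμ : 0 < μ) (a : ℝ) : J σ μ a ≤ μ⁻¹ := by
  rw [J_eq μ a hμ]
  calc μ⁻¹ * ∫ z in Set.Ioc (a - μ) (a + μ), g1 σ z ≤ μ⁻¹ * 1 :=
        mul_le_mul_of_nonneg_left (setIntegral_g1_le_one hσ _) (by positivity)
    _ = μ⁻¹ := mul_one _

lemma J_abs {σ : ℝ} (μ a : ℝ) (hμ : 0 < μ) : J σ μ a = J σ μ |a| := by
  rcases le_or_gt 0 a with h | h
  · rw [abs_of_nonneg h]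
  · rw [abs_of_neg h]
    rw [J_eq μ a hμ, J_eq μ (-a) hμ]
    congr 1
    have h1 : ∫ z in Set.Ioc (a - μ) (a + μ), g1 σ z
        = ∫ z in (a - μ)..(a + μ), g1 σ z := by
      rw [intervalIntegral.integral_of_le (by linarith : a - μ ≤ a + μ)]
    have h2 : ∫ z in Set.Ioc (-a - μ) (-a + μ), g1 σ z
        = ∫ z in (-a - μ)..(-a + μ), g1 σ z := by
      rw [intervalIntegral.integral_of_le (by linarith : -a - μ ≤ -a + μ)]
    rw [h1, h2]
    have h3 : ∫ z in (a - μ)..(a + μ), g1 σ z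
        = ∫ z in (a - μ)..(a + μ), g1 σ (-z) := by
      exact intervalIntegral.integral_congr fun z _ => (g1_even σ z).symm
    rw [h3, intervalIntegral.integral_comp_neg (g1 σ)]
    have h4 : -(a + μ) = -a - μ := by ring
    have h5 : -(a - μ) = -a + μ := by ring
    rw [h4, h5]

lemma J_tail {σ : ℝ} (hσ : 0 < σ) {μ m a : ℝ} (hμ : 0 < μ) (hm : 0 ≤ m)
    (ha : μ + m ≤ |a|) : J σ μ a ≤ μ⁻¹ * Real.exp (-m ^ 2 / (2 * σ ^ 2)) := by
  rw [J_abs μ a hμ, J_eq μ |a| hμ]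
  refine mul_le_mul_of_nonneg_left ?_ (by positivity)
  exact g1_tail hσ hm (by linarith) _

lemma gaussD_eq_prod {D : ℕ} {σ : ℝ} (hσ : 0 < σ) (v : Fin D → ℝ) :
    gaussD D σ v = ∏ i, g1 σ (v i) := by
  unfold gaussD g1
  have hb : (0:ℝ) < 2 * Real.pi * σ ^ 2 := by positivity
  rw [Finset.prod_mul_distrib, Finset.prod_const, ← Real.exp_sum]
  congr 1
  · rw [← Real.rpow_natCast ((2 * Real.pi * σ ^ 2) ^ (-(1:ℝ)/2)) (Finset.univ.card),
      ← Real.rpow_mul hb.le]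
    congr 1
    simp [Finset.card_univ]
    ring
  · congr 1
    rw [← Finset.sum_div, ← Finset.sum_neg_distrib]

lemma integral_cube_prod (D : ℕ) (f : Fin D → ℝ → ℝ) :
    ∫ y in cube D, ∏ i, f i (y i) = ∏ i, ∫ u in Set.Icc (-1:ℝ) 1, f i u := by
  have hcube : MeasurableSet (cube D) := measurableSet_Icc
  rw [← integral_indicator hcube]
  have h2 : (cube D).indicator (fun y => ∏ i, f i (y i))
      = fun y => ∏ i, (Set.Icc (-1:ℝ) 1).indicator (f i) (y i) := by
    funext y
    by_cases hy : y ∈ cube D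
    · rw [Set.indicator_of_mem hy]
      have hyi : ∀ i, y i ∈ Set.Icc (-1:ℝ) 1 := fun i => ⟨hy.1 i, hy.2 i⟩
      exact Finset.prod_congr rfl fun i _ => (Set.indicator_of_mem (hyi i) _).symm
    · rw [Set.indicator_of_notMem hy]
      have : ∃ i, y i ∉ Set.Icc (-1:ℝ) 1 := by
        by_contra h
        push_neg at h
        exact hy ⟨fun i => (h i).1, fun i => (h i).2⟩
      obtain ⟨i, hi⟩ := this
      exact (Finset.prod_eq_zero (Finset.mem_univ i)
        (Set.indicator_of_notMem hi _)).symm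
  rw [h2,
    MeasureTheory.integral_fintype_prod_volume_eq_prod (ι := Fin D)
      (fun i => (Set.Icc (-1:ℝ) 1).indicator (f i))]
  exact Finset.prod_congr rfl fun i _ => integral_indicator measurableSet_Icc

lemma gaussD_nonneg {D : ℕ} {σ : ℝ} (hσ : 0 < σ) (v : Fin D → ℝ) :
    0 ≤ gaussD D σ v := by
  unfold gaussD
  have hb : (0:ℝ) < 2 * Real.pi * σ ^ 2 := by positivity
  positivity

lemma gaussD_le {D : ℕ} {σ : ℝ} (hσ : 0 < σ) (v : Fin D → ℝ) :
    gaussD D σ v ≤ (2 * Real.pi * σ ^ 2) ^ (-(D:ℝ)/2) := by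
  unfold gaussD
  have hb : (0:ℝ) < 2 * Real.pi * σ ^ 2 := by positivity
  have h1 : Real.exp (-(∑ i, v i ^ 2) / (2 * σ ^ 2)) ≤ 1 := by
    apply Real.exp_le_one_iff.2
    apply div_nonpos_of_nonpos_of_nonneg
    · simp only [neg_nonpos]
      positivity
    · positivity
  calc (2 * Real.pi * σ ^ 2) ^ (-(D:ℝ)/2) * Real.exp (-(∑ i, v i ^ 2) / (2 * σ ^ 2))
      ≤ (2 * Real.pi * σ ^ 2) ^ (-(D:ℝ)/2) * 1 :=
        mul_le_mul_of_nonneg_left h1 (Real.rpow_nonneg hb.le _)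
    _ = _ := mul_one _

lemma volume_cube (D : ℕ) : (volume (cube D)).toReal = 2 ^ D := by
  unfold cube
  rw [Real.volume_Icc_pi_toReal (by intro i; norm_num : (-1 : Fin D → ℝ) ≤ 1)]
  simp
  norm_num

lemma mu_sigma_facts {τlo τhi : ℝ} (hτlo : 0 < τlo) {α : ℝ → ℝ} (hα : Measurable α)
    (hb : ∀ s, 0 ≤ s → τlo ≤ α s ∧ α s ≤ τhi) {t : ℝ} (ht : 0 < t) :
    0 < muT α t ∧ muT α t < 1 ∧ 0 < sigmaT α t ∧ sigmaT α t ≤ 1 ∧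
      muT α t ^ 2 + sigmaT α t ^ 2 = 1 := by
  have hvol : volume (Set.Ioc (0:ℝ) t) < ⊤ := by
    rw [Real.volume_Ioc]; exact ENNReal.ofReal_lt_top
  have hIint : IntegrableOn α (Set.Ioc 0 t) := by
    refine Integrable.mono' (g := fun _ => |τlo| + |τhi|)
      (integrableOn_const hvol.ne) hα.aestronglyMeasurable.restrict ?_
    rw [ae_restrict_iff' measurableSet_Ioc]
    refine Filter.Eventually.of_forall fun s hs => ?_
    have h := hb s hs.1.le
    rw [Real.norm_eq_abs, abs_le]
    constructor
    · show -(|τlo| + |τhi|) ≤ α s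
      linarith [h.1, neg_abs_le τlo, abs_nonneg τhi]
    · show α s ≤ |τlo| + |τhi|
      linarith [h.2, le_abs_self τhi, abs_nonneg τlo]
  have hIpos : 0 < ∫ s in Set.Ioc (0:ℝ) t, α s := by
    have h1 : ∫ _s in Set.Ioc (0:ℝ) t, (τlo : ℝ) ≤ ∫ s in Set.Ioc (0:ℝ) t, α s :=
      setIntegral_mono_on (integrableOn_const hvol.ne) hIint
        measurableSet_Ioc (fun s hs => (hb s hs.1.le).1)
    have h2 : ∫ _s in Set.Ioc (0:ℝ) t, (τlo : ℝ) = t * τlo := by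
      rw [setIntegral_const, measureReal_def, Real.volume_Ioc, sub_zero,
        ENNReal.toReal_ofReal ht.le, smul_eq_mul]
    nlinarith [mul_pos ht hτlo]
  have hμ1 : muT α t < 1 := by
    unfold muT
    calc Real.exp (-∫ s in Set.Ioc (0:ℝ) t, α s) < Real.exp 0 :=
          Real.exp_lt_exp.2 (by linarith)
      _ = 1 := Real.exp_zero
  have hμ0 : 0 < muT α t := Real.exp_pos _
  have hσsq : sigmaT α t ^ 2 = 1 - muT α t ^ 2 := by
    unfold sigmaT
    rw [Real.sq_sqrt (by nlinarith)]
  have hσ0 : 0 < sigmaT α t := Real.sqrt_pos.2 (by nlinarith)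
  have hσ1 : sigmaT α t ≤ 1 := by
    unfold sigmaT
    exact Real.sqrt_le_one.mpr (by nlinarith)
  exact ⟨hμ0, hμ1, hσ0, hσ1, by linarith⟩

lemma gaussD_aff_continuous {D : ℕ} (σ μ : ℝ) (x : Fin D → ℝ) :
    Continuous fun y : Fin D → ℝ => gaussD D σ (x - μ • y) := by
  unfold gaussD
  fun_prop

lemma main_integrableOn {D : ℕ} {σ μ K : ℝ} (hσ : 0 < σ) (hK : 0 ≤ K)
    {p₀ : (Fin D → ℝ) → ℝ} (hp : Measurable p₀) (hp0 : ∀ y, 0 ≤ p₀ y)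
    (hpK : ∀ y ∈ cube D, p₀ y ≤ K) (x : Fin D → ℝ) :
    IntegrableOn (fun y => p₀ y * gaussD D σ (x - μ • y)) (cube D) := by
  have hvol : volume (cube D) < ⊤ := (isCompact_Icc).measure_lt_top
  have hmeas : Measurable fun y : Fin D → ℝ => p₀ y * gaussD D σ (x - μ • y) :=
    hp.mul (gaussD_aff_continuous σ μ x).measurable
  refine Integrable.mono' (g := fun _ => K * (2 * Real.pi * σ ^ 2) ^ (-(D:ℝ)/2))
    (integrableOn_const hvol.ne) hmeas.aestronglyMeasurable.restrict ?_
  unfold cube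
  rw [ae_restrict_iff' measurableSet_Icc]
  refine Filter.Eventually.of_forall fun y hy => ?_
  rw [Real.norm_eq_abs, abs_of_nonneg (mul_nonneg (hp0 y) (gaussD_nonneg hσ _))]
  exact mul_le_mul (hpK y hy) (gaussD_le hσ _) (gaussD_nonneg hσ _) hK

lemma exists_max_coord {D : ℕ} (hD : 0 < D) (x : Fin D → ℝ) :
    ∃ j : Fin D, |x j| = ‖x‖ := by
  haveI : Nonempty (Fin D) := ⟨⟨0, hD⟩⟩
  obtain ⟨j, -, hj⟩ := Finset.exists_mem_eq_sup Finset.univ Finset.univ_nonempty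
    (fun i => ‖x i‖₊)
  refine ⟨j, ?_⟩
  rw [Pi.norm_def, hj]
  simp [Real.norm_eq_abs]

lemma exp_shift_ineq (D : ℕ) {m σ : ℝ} (hm : 0 ≤ m) (hσ : 0 < σ) :
    Real.exp (-((D:ℝ) * m ^ 2) / σ ^ 2) * Real.exp (-(D:ℝ))
      ≤ Real.exp (-((D:ℝ) * (m + σ) ^ 2) / (2 * σ ^ 2)) := by
  rw [← Real.exp_add]
  apply Real.exp_le_exp.2
  rw [div_add' _ _ _ (by positivity : σ ^ 2 ≠ 0),
    div_le_div_iff₀ (by positivity) (by positivity)]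
  have hhint : 0 ≤ (D:ℝ) * σ ^ 2 * (m - σ) ^ 2 :=
    mul_nonneg (mul_nonneg (Nat.cast_nonneg D) (sq_nonneg σ)) (sq_nonneg (m - σ))
  nlinarith

set_option maxHeartbeats 1600000 in
/-- Lemma A.1 of the paper: Gaussian-type upper and lower bounds
for the marginal density `p_t`. -/
theorem statement_16
    (D : ℕ) (hD : 0 < D) (K τ₁ τlo τhi : ℝ)
    (hK : 0 < K) (hτ₁ : 0 < τ₁) (hτlo : 0 < τlo) (hττ : τlo ≤ τhi) :
    ∃ C : ℝ, 0 < C ∧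
      ∀ (p₀ : (Fin D → ℝ) → ℝ) (α : ℝ → ℝ),
        ForwardHyp D τlo τhi α p₀ →
        (∀ x ∈ cube D, τ₁ ≤ p₀ x ∧ p₀ x ≤ K) →
        ∀ (x : Fin D → ℝ) (t : ℝ), 0 < t →
          C⁻¹ * Real.exp (-((D : ℝ) * max (‖x‖ - muT α t) 0 ^ 2) / sigmaT α t ^ 2) ≤
              fwdDen D α p₀ t x ∧
            fwdDen D α p₀ t x ≤
              C * Real.exp (-(max (‖x‖ - muT α t) 0 ^ 2) / (2 * sigmaT α t ^ 2)) := by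
  have hsqrt2pi : 0 < Real.sqrt (2 * Real.pi) := Real.sqrt_pos.2 (by positivity)
  refine ⟨K * 2 ^ D + τ₁⁻¹ * (Real.sqrt (2 * Real.pi) ^ D * Real.exp (D : ℝ)), by positivity,
    ?_⟩
  intro p₀ α hFH hpb x t ht
  set C : ℝ := K * 2 ^ D + τ₁⁻¹ * (Real.sqrt (2 * Real.pi) ^ D * Real.exp (D : ℝ)) with hCdef
  obtain ⟨hp_meas, hp0, hp_supp, hp_int, hα, hαb⟩ := hFH
  obtain ⟨hμ0, hμ1, hσ0, hσ1, hμσ⟩ := mu_sigma_facts hτlo hα hαb ht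
  set μ := muT α t with hμdef
  set σ := sigmaT α t with hσdef
  set m := max (‖x‖ - μ) 0 with hm
  have hm0 : 0 ≤ m := le_max_right _ _
  have habs : ∀ i, |x i| ≤ ‖x‖ := by
    intro i
    have := norm_le_pi_norm x i
    rwa [Real.norm_eq_abs] at this
  have hmx : ∀ i, x i - μ ≤ m ∧ -x i - μ ≤ m := by
    intro i
    constructor
    · calc x i - μ ≤ ‖x‖ - μ := by linarith [le_abs_self (x i), habs i]
        _ ≤ m := le_max_left _ _
    · calc -x i - μ ≤ ‖x‖ - μ := by linarith [neg_abs_le (x i), habs i]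
        _ ≤ m := le_max_left _ _
  have hK0 : 0 ≤ K := hK.le
  have hintOn : IntegrableOn (fun y => p₀ y * gaussD D σ (x - μ • y)) (cube D) :=
    main_integrableOn hσ0 hK0 hp_meas hp0 (fun y hy => (hpb y hy).2) x
  have hfwd : fwdDen D α p₀ t x = ∫ y in cube D, p₀ y * gaussD D σ (x - μ • y) := rfl
  have hCup : K * 2 ^ D ≤ C := by
    rw [hCdef]
    have : 0 ≤ τ₁⁻¹ * (Real.sqrt (2 * Real.pi) ^ D * Real.exp (D : ℝ)) := by positivity
    linarith
  constructor
  · -- LOWER BOUND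
    set L := min 1 (σ / μ) with hL
    have hL0 : 0 < L := lt_min one_pos (div_pos hσ0 hμ0)
    have hL1 : L ≤ 1 := min_le_left _ _
    have hμL : μ * L ≤ σ := by
      calc μ * L ≤ μ * (σ / μ) := mul_le_mul_of_nonneg_left (min_le_right _ _) hμ0.le
        _ = σ := by field_simp
    have hσL : σ ≤ L := by
      refine le_min hσ1 ?_
      rw [le_div_iff₀ hμ0]
      nlinarith
    set cl : Fin D → ℝ := fun i => min (max (-1) (x i / μ)) (1 - L) with hcl
    set bu : Fin D → ℝ := fun i => cl i + L with hbu
    have hab : cl ≤ bu := fun i => by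
      show cl i ≤ cl i + L
      linarith
    have hQsub : Set.Icc cl bu ⊆ cube D := by
      intro y hy
      rw [Set.mem_Icc] at hy
      refine Set.mem_Icc.mpr ⟨fun i => ?_, fun i => ?_⟩
      · have h1 : (-1 : ℝ) ≤ cl i := le_min (le_max_left _ _) (by linarith)
        have h2 : cl i ≤ y i := hy.1 i
        show (-1 : Fin D → ℝ) i ≤ y i
        simpa using le_trans h1 h2
      · have h1 : y i ≤ bu i := hy.2 i
        have h2 : bu i ≤ 1 := by
          have : cl i ≤ 1 - L := min_le_right _ _
          show cl i + L ≤ 1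
          linarith
        show y i ≤ (1 : Fin D → ℝ) i
        simpa using le_trans h1 h2
    have hdist : ∀ y ∈ Set.Icc cl bu, ∀ i, |x i - μ * y i| ≤ m + σ := by
      intro y hy i
      rw [Set.mem_Icc] at hy
      set κ := min (max (-1) (x i / μ)) 1 with hκ
      have hclκ : cl i ≤ κ := min_le_min_left _ (by linarith)
      have hκb : κ ≤ cl i + L := by
        have h1 : cl i + L = min (max (-1) (x i / μ) + L) (1 - L + L) :=
          (min_add_add_right _ _ _).symm
        rw [h1, show (1 : ℝ) - L + L = 1 by ring]
        exact min_le_min (by linarith) le_rfl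
      have hyi1 : cl i ≤ y i := hy.1 i
      have hyi2 : y i ≤ cl i + L := hy.2 i
      have hκy : |κ - y i| ≤ L := abs_le.2 ⟨by linarith, by linarith⟩
      have hμκ : μ * κ = min (max (-μ) (x i)) μ := by
        rw [hκ, mul_min_of_nonneg _ _ hμ0.le, mul_max_of_nonneg _ _ hμ0.le]
        rw [mul_one, mul_neg_one, mul_div_cancel₀ _ (ne_of_gt hμ0)]
      have hxκ : |x i - μ * κ| ≤ m := by
        rw [abs_le]
        constructor
        · -- -(m) ≤ x i - μκ  i.e. μκ - x i ≤ m
          have h1 : μ * κ ≤ max (-μ) (x i) := by rw [hμκ]; exact min_le_left _ _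
          rcases le_total (-μ) (x i) with h | h
          · rw [max_eq_right h] at h1; linarith
          · rw [max_eq_left h] at h1
            have := (hmx i).2
            linarith
        · have h1 : min (x i) μ ≤ μ * κ := by
            rw [hμκ]
            exact min_le_min (le_max_right _ _) le_rfl
          rcases le_total (x i) μ with h | h
          · rw [min_eq_left h] at h1; linarith
          · rw [min_eq_right h] at h1
            have := (hmx i).1
            linarith
      calc |x i - μ * y i| ≤ |x i - μ * κ| + |μ * κ - μ * y i| := abs_sub_le _ _ _
        _ ≤ m + σ := by
            have h2 : |μ * κ - μ * y i| = μ * |κ - y i| := by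
              rw [← mul_sub, abs_mul, abs_of_pos hμ0]
            rw [h2]
            have h3 : μ * |κ - y i| ≤ μ * L := mul_le_mul_of_nonneg_left hκy hμ0.le
            linarith
    have hb2 : (0:ℝ) < 2 * Real.pi * σ ^ 2 := by positivity
    set glow : ℝ := (2 * Real.pi * σ ^ 2) ^ (-(D:ℝ)/2)
      * Real.exp (-((D:ℝ) * (m + σ) ^ 2) / (2 * σ ^ 2)) with hglow
    have hglow0 : 0 ≤ glow := by positivity
    have hpt : ∀ y ∈ Set.Icc cl bu, τ₁ * glow ≤ p₀ y * gaussD D σ (x - μ • y) := by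
      intro y hy
      have hyc : y ∈ cube D := hQsub hy
      have h1 : τ₁ ≤ p₀ y := (hpb y hyc).1
      have h2 : glow ≤ gaussD D σ (x - μ • y) := by
        rw [hglow]
        unfold gaussD
        refine mul_le_mul_of_nonneg_left (Real.exp_le_exp.2 ?_)
          (Real.rpow_nonneg hb2.le _)
        rw [div_le_div_iff_of_pos_right (by positivity : (0:ℝ) < 2 * σ ^ 2)]
        have h3 : ∑ i, ((x - μ • y) i) ^ 2 ≤ (D:ℝ) * (m + σ) ^ 2 := by
          have h4 : ∀ i ∈ Finset.univ, ((x - μ • y) i) ^ 2 ≤ (m + σ) ^ 2 := by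
            intro i _
            have h5 : |(x - μ • y) i| ≤ m + σ := by
              have h6 := hdist y hy i
              have h7 : (x - μ • y) i = x i - μ * y i := by
                simp [smul_eq_mul]
              rwa [h7]
            calc ((x - μ • y) i) ^ 2 = |(x - μ • y) i| ^ 2 := (sq_abs _).symm
              _ ≤ (m + σ) ^ 2 := pow_le_pow_left₀ (abs_nonneg _) h5 2
          calc ∑ i, ((x - μ • y) i) ^ 2 ≤ ∑ _i : Fin D, (m + σ) ^ 2 :=
                Finset.sum_le_sum h4
            _ = (D:ℝ) * (m + σ) ^ 2 := by
                rw [Finset.sum_const, Finset.card_univ, Fintype.card_fin, nsmul_eq_mul]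
        linarith
      exact mul_le_mul h1 h2 hglow0 (le_trans hτ₁.le h1)
    have hchain1 : ∫ y in Set.Icc cl bu, p₀ y * gaussD D σ (x - μ • y)
        ≤ fwdDen D α p₀ t x := by
      rw [hfwd]
      exact setIntegral_mono_set hintOn
        (Filter.Eventually.of_forall fun y => mul_nonneg (hp0 y) (gaussD_nonneg hσ0 _))
        (HasSubset.Subset.eventuallyLE hQsub)
    have hchain2 : ∫ y in Set.Icc cl bu, (τ₁ * glow)
        ≤ ∫ y in Set.Icc cl bu, p₀ y * gaussD D σ (x - μ • y) :=
      setIntegral_mono_on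
        (integrableOn_const isCompact_Icc.measure_lt_top.ne)
        (hintOn.mono_set hQsub) measurableSet_Icc hpt
    have hvolQ : ∫ _y in Set.Icc cl bu, (τ₁ * glow) = τ₁ * glow * L ^ D := by
      rw [setIntegral_const, smul_eq_mul, measureReal_def, Real.volume_Icc_pi_toReal hab]
      have h1 : ∀ i : Fin D, bu i - cl i = L := fun i => by
        show cl i + L - cl i = L; ring
      have h2 : ∏ i : Fin D, (bu i - cl i) = L ^ D := by
        calc ∏ i : Fin D, (bu i - cl i) = ∏ _i : Fin D, L :=
              Finset.prod_congr rfl fun i _ => h1 i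
          _ = L ^ D := by rw [Finset.prod_const, Finset.card_univ, Fintype.card_fin]
      rw [h2]; ring
    have hrpow : (2 * Real.pi * σ ^ 2) ^ (-(D:ℝ)/2)
        = ((2 * Real.pi * σ ^ 2) ^ (-(1:ℝ)/2)) ^ D := by
      rw [← Real.rpow_natCast ((2 * Real.pi * σ ^ 2) ^ (-(1:ℝ)/2)) D,
        ← Real.rpow_mul hb2.le]
      congr 1
      push_cast
      ring
    have hone : σ * (2 * Real.pi * σ ^ 2) ^ (-(1:ℝ)/2) = (Real.sqrt (2 * Real.pi))⁻¹ := by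
      have h2 : (2 * Real.pi * σ ^ 2) ^ (-(1:ℝ)/2)
          = (Real.sqrt (2 * Real.pi * σ ^ 2))⁻¹ := by
        rw [Real.sqrt_eq_rpow, ← Real.rpow_neg hb2.le]
        norm_num
      rw [h2, Real.sqrt_mul (by positivity : (0:ℝ) ≤ 2 * Real.pi) (σ ^ 2),
        Real.sqrt_sq hσ0.le, mul_inv]
      rw [← mul_assoc, mul_comm σ, mul_assoc]
      rw [mul_inv_cancel₀ (ne_of_gt hσ0), mul_one]
    have hexp : Real.exp (-((D:ℝ) * m ^ 2) / σ ^ 2) * Real.exp (-(D:ℝ))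
        ≤ Real.exp (-((D:ℝ) * (m + σ) ^ 2) / (2 * σ ^ 2)) :=
      exp_shift_ineq D hm0 hσ0
    have hCinv : C⁻¹ ≤ τ₁ * ((Real.sqrt (2 * Real.pi))⁻¹ ^ D * Real.exp (-(D:ℝ))) := by
      have h1 : τ₁ * ((Real.sqrt (2 * Real.pi))⁻¹ ^ D * Real.exp (-(D:ℝ)))
          = (τ₁⁻¹ * (Real.sqrt (2 * Real.pi) ^ D * Real.exp (D:ℝ)))⁻¹ := by
        rw [Real.exp_neg, inv_pow, mul_inv, mul_inv, inv_inv]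
      rw [h1]
      have hXpos : 0 < τ₁⁻¹ * (Real.sqrt (2 * Real.pi) ^ D * Real.exp (D:ℝ)) := by
        positivity
      have hXle : τ₁⁻¹ * (Real.sqrt (2 * Real.pi) ^ D * Real.exp (D:ℝ)) ≤ C := by
        rw [hCdef]
        nlinarith [mul_pos hK (pow_pos (by norm_num : (0:ℝ) < 2) D)]
      exact inv_anti₀ hXpos hXle
    calc C⁻¹ * Real.exp (-((D:ℝ) * m ^ 2) / σ ^ 2)
        ≤ (τ₁ * ((Real.sqrt (2 * Real.pi))⁻¹ ^ D * Real.exp (-(D:ℝ))))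
            * Real.exp (-((D:ℝ) * m ^ 2) / σ ^ 2) :=
          mul_le_mul_of_nonneg_right hCinv (Real.exp_pos _).le
      _ = τ₁ * ((Real.sqrt (2 * Real.pi))⁻¹ ^ D
            * (Real.exp (-((D:ℝ) * m ^ 2) / σ ^ 2) * Real.exp (-(D:ℝ)))) := by ring
      _ ≤ τ₁ * ((Real.sqrt (2 * Real.pi))⁻¹ ^ D
            * Real.exp (-((D:ℝ) * (m + σ) ^ 2) / (2 * σ ^ 2))) := by
          refine mul_le_mul_of_nonneg_left
            (mul_le_mul_of_nonneg_left hexp (by positivity)) hτ₁.le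
      _ = τ₁ * glow * σ ^ D := by
          rw [hglow, ← hone, mul_pow, hrpow]
          ring
      _ ≤ τ₁ * glow * L ^ D :=
          mul_le_mul_of_nonneg_left (pow_le_pow_left₀ hσ0.le hσL D)
            (mul_nonneg hτ₁.le hglow0)
      _ = ∫ _y in Set.Icc cl bu, (τ₁ * glow) := hvolQ.symm
      _ ≤ ∫ y in Set.Icc cl bu, p₀ y * gaussD D σ (x - μ • y) := hchain2
      _ ≤ fwdDen D α p₀ t x := hchain1
  · -- UPPER BOUND
    obtain ⟨j, hj⟩ := exists_max_coord hD x
    have hE0 : 0 ≤ Real.exp (-m ^ 2 / (2 * σ ^ 2)) := (Real.exp_pos _).le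
    rcases le_total (μ ^ 2) (σ ^ 2) with hcase | hcase
    · -- σ² ≥ 1/2
      have hσhalf : (1:ℝ) ≤ 2 * σ ^ 2 := by nlinarith
      have hb2 : (0:ℝ) < 2 * Real.pi * σ ^ 2 := by positivity
      have hpt : ∀ y ∈ cube D, p₀ y * gaussD D σ (x - μ • y)
          ≤ K * ((2 * Real.pi * σ ^ 2) ^ (-(D:ℝ)/2) * Real.exp (-m ^ 2 / (2 * σ ^ 2))) := by
        intro y hy
        have hyj : |y j| ≤ 1 := abs_le.2 ⟨hy.1 j, hy.2 j⟩
        have h2 : gaussD D σ (x - μ • y)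
            ≤ (2 * Real.pi * σ ^ 2) ^ (-(D:ℝ)/2) * Real.exp (-m ^ 2 / (2 * σ ^ 2)) := by
          unfold gaussD
          refine mul_le_mul_of_nonneg_left (Real.exp_le_exp.2 ?_)
            (Real.rpow_nonneg hb2.le _)
          rw [div_le_div_iff_of_pos_right (by positivity : (0:ℝ) < 2 * σ ^ 2)]
          have hmj : m ≤ |(x - μ • y) j| := by
            have h7 : (x - μ • y) j = x j - μ * y j := by simp [smul_eq_mul]
            rw [h7]
            have h8 : |x j| - |μ * y j| ≤ |x j - μ * y j| := abs_sub_abs_le_abs_sub _ _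
            have h9 : |μ * y j| ≤ μ := by
              rw [abs_mul, abs_of_pos hμ0]
              calc μ * |y j| ≤ μ * 1 := mul_le_mul_of_nonneg_left hyj hμ0.le
                _ = μ := mul_one _
            rw [hm]
            apply max_le
            · rw [← hj]; linarith
            · exact abs_nonneg _
          have h10 : m ^ 2 ≤ ∑ i, ((x - μ • y) i) ^ 2 := by
            calc m ^ 2 ≤ |(x - μ • y) j| ^ 2 := pow_le_pow_left₀ hm0 hmj 2
              _ = ((x - μ • y) j) ^ 2 := sq_abs _
              _ ≤ ∑ i, ((x - μ • y) i) ^ 2 :=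
                  Finset.single_le_sum (f := fun i => ((x - μ • y) i) ^ 2)
                    (fun i _ => sq_nonneg _) (Finset.mem_univ j)
          linarith
        exact mul_le_mul (hpb y hy).2 h2 (gaussD_nonneg hσ0 _) hK0
      have hup : fwdDen D α p₀ t x
          ≤ K * ((2 * Real.pi * σ ^ 2) ^ (-(D:ℝ)/2) * Real.exp (-m ^ 2 / (2 * σ ^ 2)))
            * 2 ^ D := by
        rw [hfwd]
        calc ∫ y in cube D, p₀ y * gaussD D σ (x - μ • y)
            ≤ ∫ _y in cube D,
                K * ((2 * Real.pi * σ ^ 2) ^ (-(D:ℝ)/2)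
                  * Real.exp (-m ^ 2 / (2 * σ ^ 2))) :=
              setIntegral_mono_on hintOn
                (integrableOn_const isCompact_Icc.measure_lt_top.ne)
                measurableSet_Icc hpt
          _ = _ := by rw [setIntegral_const, smul_eq_mul, measureReal_def, volume_cube]; ring
      have hc1 : (2 * Real.pi * σ ^ 2) ^ (-(D:ℝ)/2) ≤ 1 := by
        refine Real.rpow_le_one_of_one_le_of_nonpos ?_ ?_
        · nlinarith [Real.pi_gt_three]
        · have : (0:ℝ) ≤ (D:ℝ) := Nat.cast_nonneg D
          linarith [div_nonneg this (by norm_num : (0:ℝ) ≤ 2)]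
      calc fwdDen D α p₀ t x
          ≤ K * ((2 * Real.pi * σ ^ 2) ^ (-(D:ℝ)/2) * Real.exp (-m ^ 2 / (2 * σ ^ 2)))
            * 2 ^ D := hup
        _ ≤ K * (1 * Real.exp (-m ^ 2 / (2 * σ ^ 2))) * 2 ^ D := by
            refine mul_le_mul_of_nonneg_right (mul_le_mul_of_nonneg_left
              (mul_le_mul_of_nonneg_right hc1 hE0) hK0) (by positivity)
        _ = K * 2 ^ D * Real.exp (-m ^ 2 / (2 * σ ^ 2)) := by ring
        _ ≤ C * Real.exp (-m ^ 2 / (2 * σ ^ 2)) :=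
            mul_le_mul_of_nonneg_right hCup hE0
    · -- μ² ≥ 1/2
      have hμhalf : (1:ℝ)/2 ≤ μ ^ 2 := by nlinarith
      have hμ2 : (1:ℝ)/2 ≤ μ := by nlinarith
      have hμinv : μ⁻¹ ≤ 2 := by
        have := inv_anti₀ (by norm_num : (0:ℝ) < 1/2) hμ2
        simpa using this
      have hgint : IntegrableOn (fun y => K * gaussD D σ (x - μ • y)) (cube D) := by
        have hc : Continuous fun y : Fin D → ℝ => K * gaussD D σ (x - μ • y) :=
          continuous_const.mul (gaussD_aff_continuous σ μ x)
        exact hc.integrableOn_Icc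
      have hstep1 : fwdDen D α p₀ t x ≤ ∫ y in cube D, K * gaussD D σ (x - μ • y) := by
        rw [hfwd]
        exact setIntegral_mono_on hintOn hgint measurableSet_Icc
          (fun y hy => mul_le_mul_of_nonneg_right (hpb y hy).2 (gaussD_nonneg hσ0 _))
      have hstep2 : ∫ y in cube D, K * gaussD D σ (x - μ • y)
          = K * ∏ i, J σ μ (x i) := by
        rw [integral_const_mul]
        congr 1
        calc ∫ y in cube D, gaussD D σ (x - μ • y)
            = ∫ y in cube D, ∏ i, g1 σ (x i - μ * y i) := by
              refine setIntegral_congr_fun measurableSet_Icc fun y _ => ?_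
              rw [gaussD_eq_prod hσ0]
              exact Finset.prod_congr rfl fun i _ => by simp [smul_eq_mul]
          _ = ∏ i, ∫ u in Set.Icc (-1:ℝ) 1, g1 σ (x i - μ * u) :=
              integral_cube_prod D (fun i u => g1 σ (x i - μ * u))
          _ = ∏ i, J σ μ (x i) := rfl
      have hJj : J σ μ (x j) ≤ μ⁻¹ * Real.exp (-m ^ 2 / (2 * σ ^ 2)) := by
        rcases le_total ‖x‖ μ with hc | hc
        · have hmz : m = 0 := max_eq_right (by linarith)
          rw [hmz]
          have hz : Real.exp (-(0:ℝ) ^ 2 / (2 * σ ^ 2)) = 1 := by norm_num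
          rw [hz, mul_one]
          exact J_le hσ0 hμ0 _
        · have hmm : m = ‖x‖ - μ := max_eq_left (by linarith)
          refine J_tail hσ0 hμ0 hm0 ?_
          rw [hj]
          linarith
      have hprod : ∏ i, J σ μ (x i) ≤ μ⁻¹ ^ D * Real.exp (-m ^ 2 / (2 * σ ^ 2)) := by
        calc ∏ i, J σ μ (x i)
            = J σ μ (x j) * ∏ i ∈ Finset.univ.erase j, J σ μ (x i) :=
              (Finset.mul_prod_erase Finset.univ _ (Finset.mem_univ j)).symm
          _ ≤ (μ⁻¹ * Real.exp (-m ^ 2 / (2 * σ ^ 2)))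
                * ∏ _i ∈ Finset.univ.erase j, μ⁻¹ := by
              refine mul_le_mul hJj
                (Finset.prod_le_prod (fun i _ => J_nonneg hσ0 _ _)
                  (fun i _ => J_le hσ0 hμ0 _))
                (Finset.prod_nonneg fun i _ => J_nonneg hσ0 _ _) (by positivity)
          _ = μ⁻¹ ^ D * Real.exp (-m ^ 2 / (2 * σ ^ 2)) := by
              rw [Finset.prod_const, Finset.card_erase_of_mem (Finset.mem_univ j),
                Finset.card_univ, Fintype.card_fin]
              have h1 : μ⁻¹ * μ⁻¹ ^ (D - 1) = μ⁻¹ ^ D := by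
                rw [← pow_succ']
                congr 1
                omega
              calc (μ⁻¹ * Real.exp (-m ^ 2 / (2 * σ ^ 2))) * μ⁻¹ ^ (D - 1)
                  = (μ⁻¹ * μ⁻¹ ^ (D - 1)) * Real.exp (-m ^ 2 / (2 * σ ^ 2)) := by ring
                _ = _ := by rw [h1]
      calc fwdDen D α p₀ t x ≤ K * ∏ i, J σ μ (x i) := by rw [← hstep2]; exact hstep1
        _ ≤ K * (μ⁻¹ ^ D * Real.exp (-m ^ 2 / (2 * σ ^ 2))) :=
            mul_le_mul_of_nonneg_left hprod hK0
        _ ≤ K * (2 ^ D * Real.exp (-m ^ 2 / (2 * σ ^ 2))) := by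
            refine mul_le_mul_of_nonneg_left (mul_le_mul_of_nonneg_right
              (pow_le_pow_left₀ (inv_nonneg.2 hμ0.le) hμinv D) hE0) hK0
        _ = K * 2 ^ D * Real.exp (-m ^ 2 / (2 * σ ^ 2)) := by ring
        _ ≤ C * Real.exp (-m ^ 2 / (2 * σ ^ 2)) :=
            mul_le_mul_of_nonneg_right hCup hE0

end DMpaper

end
end

section
/- Let D ∈ ℕ, K > 0, 0 < τ_lo ≤ τ_hi, and let p₀ be a probability density on ℝ^D supported on [−1,1]^D with p₀(x) ≤ K for all x ∈ [−1,1]^D; let α, μ_t, σ_t, p_t be as in the forward process. Then for every multi-index k ∈ (ℤ_{≥0})^D there exists a constant C > 0 depending only on (D, K, k, τ_hi, τ_lo) such that |(D^k p_t)(x)| ≤ C / σ_t^{|k|} for every x ∈ ℝ^D and every t > 0, where D^k denotes the mixed partial derivative in x of order k and |k| is the sum of the entries of k. -/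
open MeasureTheory
open scoped BigOperators ENNReal NNReal

noncomputable section

namespace DMpaper

attribute [local instance] Classical.propDecidable

/-- Partial derivative in the `i`-th coordinate. -/
def pderivG (D : ℕ) (i : Fin D) (f : (Fin D → ℝ) → ℝ) : (Fin D → ℝ) → ℝ :=
  fun x => deriv (fun s : ℝ => f (Function.update x i s)) (x i)

/-- Mixed partial derivative for a multi-index `γ`. -/
def mderivG (D : ℕ) (γ : Fin D → ℕ) (f : (Fin D → ℝ) → ℝ) : (Fin D → ℝ) → ℝ :=
  (List.finRange D).foldr (fun i g => (pderivG D i)^[γ i] g) f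

/-! ### Auxiliary 1-D material -/

/-- standard 1-D gaussian kernel -/
def gker (u : ℝ) : ℝ := Real.exp (-(u ^ 2 / 2))

lemma contDiff_gker : ContDiff ℝ ⊤ gker :=
  Real.contDiff_exp.comp (((contDiff_id.pow 2).div_const 2).neg)

lemma pow_abs_le (i : ℕ) (v : ℝ) : |v| ^ i ≤ (1 + 4 ^ i * i.factorial) * Real.exp (v ^ 2 / 4) := by
  have h4 : (0:ℝ) ≤ v ^ 2 / 4 := by positivity
  have hexp1 : (1:ℝ) ≤ Real.exp (v ^ 2 / 4) := Real.one_le_exp h4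
  rcases le_or_gt |v| 1 with h | h
  · calc |v| ^ i ≤ 1 ^ i := pow_le_pow_left₀ (abs_nonneg v) h i
      _ = 1 := one_pow i
      _ ≤ (1 + 4 ^ i * i.factorial) * 1 := by
          have : (0:ℝ) ≤ 4 ^ i * i.factorial := by positivity
          nlinarith
      _ ≤ (1 + 4 ^ i * i.factorial) * Real.exp (v ^ 2 / 4) := by
          have : (0:ℝ) < 1 + 4 ^ i * i.factorial := by positivity
          nlinarith
  · have h1 : |v| ^ i ≤ (v ^ 2 / 4) ^ i * 4 ^ i := by
      have : |v| ^ i ≤ (v ^ 2) ^ i := by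
        have hv2 : |v| ≤ v ^ 2 := by nlinarith [sq_abs v]
        exact pow_le_pow_left₀ (abs_nonneg v) hv2 i
      calc |v| ^ i ≤ (v ^ 2) ^ i := this
        _ = (v ^ 2 / 4) ^ i * 4 ^ i := by rw [← mul_pow]; ring_nf
    have h2 : (v ^ 2 / 4) ^ i ≤ i.factorial * Real.exp (v ^ 2 / 4) := by
      have := Real.pow_div_factorial_le_exp (x := v ^ 2 / 4) h4 i
      have hfac : (0:ℝ) < i.factorial := by positivity
      rw [div_le_iff₀ hfac] at this
      linarith [this]
    calc |v| ^ i ≤ (v ^ 2 / 4) ^ i * 4 ^ i := h1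
      _ ≤ (i.factorial * Real.exp (v ^ 2 / 4)) * 4 ^ i := by
          have : (0:ℝ) < 4 ^ i := by positivity
          nlinarith
      _ ≤ (1 + 4 ^ i * i.factorial) * Real.exp (v ^ 2 / 4) := by
          have he : (0:ℝ) < Real.exp (v ^ 2 / 4) := Real.exp_pos _
          nlinarith

open Polynomial in
lemma hermite_growth (n : ℕ) : ∃ B : ℝ, 0 < B ∧ ∀ v : ℝ,
    |(Polynomial.aeval v (Polynomial.hermite n) : ℝ)| ≤ B * Real.exp (v ^ 2 / 4) := by
  refine ⟨∑ i ∈ Finset.range ((hermite n).natDegree + 1),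
      |((hermite n).coeff i : ℝ)| * (1 + 4 ^ i * i.factorial) + 1, by positivity, fun v => ?_⟩
  have he : (0:ℝ) < Real.exp (v ^ 2 / 4) := Real.exp_pos _
  have h := Polynomial.aeval_eq_sum_range (R := ℤ) (x := v) (p := hermite n)
  rw [h]
  calc |∑ i ∈ Finset.range ((hermite n).natDegree + 1), (hermite n).coeff i • v ^ i|
      ≤ ∑ i ∈ Finset.range ((hermite n).natDegree + 1), |(hermite n).coeff i • v ^ i| :=
        Finset.abs_sum_le_sum_abs _ _
    _ ≤ ∑ i ∈ Finset.range ((hermite n).natDegree + 1),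
        |((hermite n).coeff i : ℝ)| * ((1 + 4 ^ i * i.factorial) * Real.exp (v ^ 2 / 4)) := by
        refine Finset.sum_le_sum fun i _ => ?_
        rw [zsmul_eq_mul, abs_mul]
        refine mul_le_mul_of_nonneg_left ?_ (abs_nonneg _)
        rw [abs_pow]
        exact pow_abs_le i v
    _ = (∑ i ∈ Finset.range ((hermite n).natDegree + 1),
        |((hermite n).coeff i : ℝ)| * (1 + 4 ^ i * i.factorial)) * Real.exp (v ^ 2 / 4) := by
        rw [Finset.sum_mul]
        exact Finset.sum_congr rfl fun i _ => by ring
    _ ≤ _ := by nlinarith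

open Polynomial in
lemma iteratedDeriv_gker (n : ℕ) (v : ℝ) :
    iteratedDeriv n gker v = (-1 : ℝ) ^ n * aeval v (hermite n) * Real.exp (-(v ^ 2 / 2)) := by
  rw [iteratedDeriv_eq_iterate]
  exact Polynomial.deriv_gaussian_eq_hermite_mul_gaussian n v

open Polynomial in
lemma gkbound (n : ℕ) : ∃ B : ℝ, 0 < B ∧ ∀ v : ℝ,
    |iteratedDeriv n gker v| ≤ B * Real.exp (-(v ^ 2 / 4)) := by
  obtain ⟨B, hB, h⟩ := hermite_growth n
  refine ⟨B, hB, fun v => ?_⟩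
  rw [iteratedDeriv_gker, abs_mul, abs_mul, abs_pow, abs_neg, abs_one, one_pow, one_mul,
    Real.abs_exp]
  calc |aeval v (hermite n)| * Real.exp (-(v ^ 2 / 2))
      ≤ (B * Real.exp (v ^ 2 / 4)) * Real.exp (-(v ^ 2 / 2)) := by
        exact mul_le_mul_of_nonneg_right (h v) (Real.exp_pos _).le
    _ = B * Real.exp (-(v ^ 2 / 4)) := by
        rw [mul_assoc, ← Real.exp_add]; ring_nf

/-- chosen bound constant -/
def BB (n : ℕ) : ℝ := (gkbound n).choose

lemma BB_pos (n : ℕ) : 0 < BB n := (gkbound n).choose_spec.1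

lemma BB_spec (n : ℕ) (v : ℝ) : |iteratedDeriv n gker v| ≤ BB n * Real.exp (-(v ^ 2 / 4)) :=
  (gkbound n).choose_spec.2 v

lemma BB_spec' (n : ℕ) (v : ℝ) : |iteratedDeriv n gker v| ≤ BB n := by
  have := BB_spec n v
  have h1 : Real.exp (-(v ^ 2 / 4)) ≤ 1 := Real.exp_le_one_iff.mpr (by nlinarith [sq_nonneg v])
  nlinarith [BB_pos n]

lemma integrable_expq : Integrable (fun v : ℝ => Real.exp (-(v ^ 2 / 4))) := by
  have := integrable_exp_neg_mul_sq (b := (4:ℝ)⁻¹) (by norm_num)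
  refine this.congr ?_
  filter_upwards with v
  ring_nf

lemma integrable_iD_gker (n : ℕ) : Integrable (fun v => |iteratedDeriv n gker v|) := by
  refine (Integrable.mono' (integrable_expq.const_mul (BB n))
    ((contDiff_gker.continuous_iteratedDeriv n le_top).aestronglyMeasurable) ?_).abs
  filter_upwards with v
  simpa using BB_spec n v

/-- the 1-D integral constant -/
def Jint (n : ℕ) : ℝ := ∫ v, |iteratedDeriv n gker v|

lemma Jint_nonneg (n : ℕ) : 0 ≤ Jint n :=
  integral_nonneg fun v => abs_nonneg _

/-- scaled kernel -/
def gk1 (σ s : ℝ) : ℝ := gker (σ⁻¹ * s)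

lemma contDiff_gk1 (σ : ℝ) : ContDiff ℝ ⊤ (gk1 σ) :=
  contDiff_gker.comp (contDiff_const.mul contDiff_id)

lemma iteratedDeriv_gk1 (σ : ℝ) (n : ℕ) (s : ℝ) :
    iteratedDeriv n (gk1 σ) s = σ⁻¹ ^ n * iteratedDeriv n gker (σ⁻¹ * s) :=
  congrFun (iteratedDeriv_comp_const_mul (n := n) (f := gker) (contDiff_gker.of_le le_top) σ⁻¹) s

lemma gk1_le (σ : ℝ) (hσ : 0 < σ) (n : ℕ) (s : ℝ) :
    |iteratedDeriv n (gk1 σ) s| ≤ σ⁻¹ ^ n * BB n := by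
  rw [iteratedDeriv_gk1, abs_mul, abs_pow, abs_inv, abs_of_pos hσ]
  exact mul_le_mul_of_nonneg_left (BB_spec' n _) (by positivity)

lemma integrable_iD_gk1 (σ : ℝ) (hσ : 0 < σ) (n : ℕ) :
    Integrable (fun s => |iteratedDeriv n (gk1 σ) s|) := by
  have h : Integrable (fun s => |iteratedDeriv n gker (σ⁻¹ * s)|) :=
    (integrable_iD_gker n).comp_mul_left' (inv_ne_zero hσ.ne')
  refine ((h.const_mul (σ⁻¹ ^ n)).congr ?_)
  filter_upwards with s
  rw [iteratedDeriv_gk1, abs_mul, abs_pow, abs_inv, abs_of_pos hσ]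

lemma int_iD_gk1 (σ : ℝ) (hσ : 0 < σ) (n : ℕ) :
    ∫ s, |iteratedDeriv n (gk1 σ) s| = σ⁻¹ ^ n * σ * Jint n := by
  have e : (fun s => |iteratedDeriv n (gk1 σ) s|)
      = fun s => σ⁻¹ ^ n * |iteratedDeriv n gker (σ⁻¹ * s)| := by
    funext s
    rw [iteratedDeriv_gk1, abs_mul, abs_pow, abs_inv, abs_of_pos hσ]
  rw [e, MeasureTheory.integral_const_mul,
    Measure.integral_comp_inv_mul_left (fun v => |iteratedDeriv n gker v|) σ,
    abs_of_pos hσ, smul_eq_mul, Jint]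
  ring

lemma int_affine (F : ℝ → ℝ) (c μc : ℝ) :
    ∫ t, F (c - μc * t) = |μc⁻¹| * ∫ u, F u := by
  have h1 := Measure.integral_comp_mul_left (fun u => F (c - u)) μc
  simp only [smul_eq_mul] at h1
  rw [show (fun t => F (c - μc * t)) = fun t => (fun u => F (c - u)) (μc * t) from rfl, h1,
    integral_sub_left_eq_self (fun u => F u) volume c]

lemma int_affine_integrable (F : ℝ → ℝ) (hF : Integrable F) (c μc : ℝ) (hμ : μc ≠ 0) :
    Integrable (fun t => F (c - μc * t)) :=
  (hF.comp_sub_left c).comp_mul_left' hμ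

/-! ### Multi-dimensional product kernels -/

/-- product of 1-D derivative factors -/
def Fm (D : ℕ) (σ : ℝ) (m : Fin D → ℕ) (z : Fin D → ℝ) : ℝ :=
  ∏ j, iteratedDeriv (m j) (gk1 σ) (z j)

lemma continuous_Fm (D : ℕ) (σ : ℝ) (m : Fin D → ℕ) : Continuous (Fm D σ m) :=
  continuous_finset_prod _ fun j _ =>
    ((contDiff_gk1 σ).continuous_iteratedDeriv (m j) le_top).comp (continuous_apply j)

lemma Fm_le (D : ℕ) (σ : ℝ) (hσ : 0 < σ) (m : Fin D → ℕ) (z : Fin D → ℝ) :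
    |Fm D σ m z| ≤ σ⁻¹ ^ (∑ j, m j) * ∏ j, BB (m j) := by
  rw [Fm, Finset.abs_prod]
  calc ∏ j, |iteratedDeriv (m j) (gk1 σ) (z j)|
      ≤ ∏ j, σ⁻¹ ^ (m j) * BB (m j) :=
        Finset.prod_le_prod (fun j _ => abs_nonneg _) (fun j _ => gk1_le σ hσ (m j) (z j))
    _ = (∏ j, σ⁻¹ ^ (m j)) * ∏ j, BB (m j) := Finset.prod_mul_distrib
    _ = σ⁻¹ ^ (∑ j, m j) * ∏ j, BB (m j) := by rw [← Finset.prod_pow_eq_pow_sum]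

lemma Fm_update (D : ℕ) (σ : ℝ) (m : Fin D → ℕ) (i : Fin D) (z : Fin D → ℝ) (u : ℝ) :
    Fm D σ m (Function.update z i u)
      = iteratedDeriv (m i) (gk1 σ) u * ∏ j ∈ Finset.univ.erase i,
          iteratedDeriv (m j) (gk1 σ) (z j) := by
  rw [Fm, ← Finset.mul_prod_erase Finset.univ _ (Finset.mem_univ i), Function.update_self]
  congr 1
  exact Finset.prod_congr rfl fun j hj =>
    by rw [Function.update_of_ne (Finset.ne_of_mem_erase hj)]

lemma hasDerivAt_iD_gk1 (σ : ℝ) (n : ℕ) (s : ℝ) :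
    HasDerivAt (iteratedDeriv n (gk1 σ)) (iteratedDeriv (n + 1) (gk1 σ) s) s := by
  have hd : DifferentiableAt ℝ (iteratedDeriv n (gk1 σ)) s :=
    ((contDiff_gk1 σ).differentiable_iteratedDeriv n
      (lt_top_iff_ne_top.mpr (by simp))).differentiableAt
  have := hd.hasDerivAt
  rwa [← iteratedDeriv_succ] at this

lemma hasDerivAt_Fm (D : ℕ) (σ : ℝ) (m : Fin D → ℕ) (i : Fin D) (z : Fin D → ℝ) (s : ℝ) :
    HasDerivAt (fun u => Fm D σ m (Function.update z i u))
      (Fm D σ (Function.update m i (m i + 1)) (Function.update z i s)) s := by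
  have h1 : HasDerivAt (fun u => iteratedDeriv (m i) (gk1 σ) u *
      ∏ j ∈ Finset.univ.erase i, iteratedDeriv (m j) (gk1 σ) (z j))
      (iteratedDeriv (m i + 1) (gk1 σ) s *
      ∏ j ∈ Finset.univ.erase i, iteratedDeriv (m j) (gk1 σ) (z j)) s :=
    (hasDerivAt_iD_gk1 σ (m i) s).mul_const _
  have e1 : (fun u => Fm D σ m (Function.update z i u)) = fun u =>
      iteratedDeriv (m i) (gk1 σ) u *
        ∏ j ∈ Finset.univ.erase i, iteratedDeriv (m j) (gk1 σ) (z j) :=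
    funext fun u => Fm_update D σ m i z u
  have e2 : Fm D σ (Function.update m i (m i + 1)) (Function.update z i s)
      = iteratedDeriv (m i + 1) (gk1 σ) s *
        ∏ j ∈ Finset.univ.erase i, iteratedDeriv (m j) (gk1 σ) (z j) := by
    rw [Fm_update, Function.update_self]
    congr 1
    exact Finset.prod_congr rfl fun j hj =>
      by rw [Function.update_of_ne (Finset.ne_of_mem_erase hj)]
  rw [e1, e2]
  exact h1

lemma update_sub (D : ℕ) (x : Fin D → ℝ) (i : Fin D) (s μc : ℝ) (y : Fin D → ℝ) :
    Function.update x i s - μc • y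
      = Function.update (x - μc • y) i (s - μc * y i) := by
  funext j
  by_cases h : j = i
  · subst h; simp
  · simp [Function.update_of_ne h]

lemma cube_finite (D : ℕ) : volume (cube D) ≠ ⊤ :=
  ((isCompact_Icc).measure_lt_top).ne

/-! ### The parametrized integral and differentiation under the integral -/

/-- the parametrized integral -/
def Ip (D : ℕ) (σ μc : ℝ) (p₀ : (Fin D → ℝ) → ℝ) (m : Fin D → ℕ) (x : Fin D → ℝ) : ℝ :=
  ∫ y in cube D, p₀ y * Fm D σ m (x - μc • y)

lemma integrableOn_Ip (D : ℕ) (σ μc K : ℝ) (hσ : 0 < σ)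
    (p₀ : (Fin D → ℝ) → ℝ) (hp : Measurable p₀) (h0 : ∀ y, 0 ≤ p₀ y) (hK : ∀ y, p₀ y ≤ K)
    (m : Fin D → ℕ) (x : Fin D → ℝ) :
    IntegrableOn (fun y => p₀ y * Fm D σ m (x - μc • y)) (cube D) := by
  apply Measure.integrableOn_of_bounded (cube_finite D)
    ((hp.aestronglyMeasurable).mul
      (((continuous_Fm D σ m).comp (continuous_const.sub (continuous_id.const_smul μc)) : Continuous (fun y => Fm D σ m (x - μc • y))).aestronglyMeasurable))
    (M := K * (σ⁻¹ ^ (∑ j, m j) * ∏ j, BB (m j)))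
  filter_upwards with y
  simp only [Pi.mul_apply, Function.comp_apply, id_eq]
  rw [Real.norm_eq_abs, abs_mul, abs_of_nonneg (h0 y)]
  have h1 := Fm_le D σ hσ m (x - μc • y)
  have h2 : 0 ≤ σ⁻¹ ^ (∑ j, m j) * ∏ j, BB (m j) := by
    have : (0:ℝ) < ∏ j, BB (m j) := Finset.prod_pos fun j _ => BB_pos (m j)
    positivity
  have h3 : 0 ≤ p₀ y := h0 y
  nlinarith [abs_nonneg (Fm D σ m (x - μc • y)), hK y]

lemma pderiv_Ip (D : ℕ) (σ μc K : ℝ) (hσ : 0 < σ) (hK : 0 ≤ K)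
    (p₀ : (Fin D → ℝ) → ℝ) (hp : Measurable p₀) (h0 : ∀ y, 0 ≤ p₀ y) (hKb : ∀ y, p₀ y ≤ K)
    (m : Fin D → ℕ) (i : Fin D) :
    pderivG D i (Ip D σ μc p₀ m) = Ip D σ μc p₀ (Function.update m i (m i + 1)) := by
  funext x
  set m' := Function.update m i (m i + 1) with hm'
  have key : HasDerivAt (fun s => ∫ y in cube D, p₀ y * Fm D σ m (Function.update x i s - μc • y))
      (∫ y in cube D, p₀ y * Fm D σ m' (Function.update x i (x i) - μc • y)) (x i) := by
    have Bpos : (0:ℝ) < ∏ j, BB (m' j) := Finset.prod_pos fun j _ => BB_pos (m' j)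
    refine (hasDerivAt_integral_of_dominated_loc_of_deriv_le (Metric.ball_mem_nhds _ one_pos)
      (F := fun s y => p₀ y * Fm D σ m (Function.update x i s - μc • y))
      (F' := fun s y => p₀ y * Fm D σ m' (Function.update x i s - μc • y))
      (bound := fun _ => K * (σ⁻¹ ^ (∑ j, m' j) * ∏ j, BB (m' j)))
      ?_ ?_ ?_ ?_ ?_ ?_).2
    · filter_upwards with s
      exact ((hp.aestronglyMeasurable).mul
        (((continuous_Fm D σ m).comp (continuous_const.sub (continuous_id.const_smul μc)) : Continuous (fun y => Fm D σ m (Function.update x i s - μc • y))).aestronglyMeasurable)).restrict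
    · exact integrableOn_Ip D σ μc K hσ p₀ hp h0 hKb m _
    · exact ((hp.aestronglyMeasurable).mul
        (((continuous_Fm D σ m').comp (continuous_const.sub (continuous_id.const_smul μc)) : Continuous (fun y => Fm D σ m' (Function.update x i (x i) - μc • y))).aestronglyMeasurable)).restrict
    · filter_upwards with y s _
      rw [Real.norm_eq_abs, abs_mul, abs_of_nonneg (h0 y)]
      have h1 := Fm_le D σ hσ m' (Function.update x i s - μc • y)
      have h2 : 0 ≤ σ⁻¹ ^ (∑ j, m' j) * ∏ j, BB (m' j) := by positivity
      nlinarith [abs_nonneg (Fm D σ m' (Function.update x i s - μc • y)), hKb y, h0 y]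
    · exact integrableOn_const (cube_finite D)
    · filter_upwards with y s _
      have base := hasDerivAt_Fm D σ m i (x - μc • y) (s - μc * y i)
      have inner : HasDerivAt (fun s : ℝ => s - μc * y i) 1 s := by
        simpa using (hasDerivAt_id s).sub_const (μc * y i)
      have comp := base.comp s inner
      rw [mul_one] at comp
      have e : ∀ u : ℝ, Fm D σ m (Function.update x i u - μc • y)
          = Fm D σ m (Function.update (x - μc • y) i (u - μc * y i)) := fun u => by
        rw [update_sub]
      have e' : Fm D σ m' (Function.update x i s - μc • y)
          = Fm D σ m' (Function.update (x - μc • y) i (s - μc * y i)) := by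
        rw [update_sub]
      have h5 : HasDerivAt (fun u => Fm D σ m (Function.update (x - μc • y) i (u - μc * y i)))
          (Fm D σ m' (Function.update (x - μc • y) i (s - μc * y i))) s := comp
      rw [← e'] at h5
      have h6 := h5.const_mul (p₀ y)
      simpa only [← e] using h6
  have hder : deriv (fun s => Ip D σ μc p₀ m (Function.update x i s)) (x i)
      = ∫ y in cube D, p₀ y * Fm D σ m' (Function.update x i (x i) - μc • y) := by
    apply HasDerivAt.deriv
    simpa only [Ip] using key
  rw [pderivG, hder, Function.update_eq_self]
  rfl

section
variable (D : ℕ) (σ μc K : ℝ) (hσ : 0 < σ) (hK : 0 ≤ K)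
    (p₀ : (Fin D → ℝ) → ℝ) (hp : Measurable p₀) (h0 : ∀ y, 0 ≤ p₀ y) (hKb : ∀ y, p₀ y ≤ K)

include hσ hK hp h0 hKb

lemma iter_pderiv_Ip (i : Fin D) (n : ℕ) (m : Fin D → ℕ) :
    (pderivG D i)^[n] (Ip D σ μc p₀ m) = Ip D σ μc p₀ (Function.update m i (m i + n)) := by
  induction n with
  | zero => simp
  | succ n ih =>
      rw [Function.iterate_succ_apply', ih,
        pderiv_Ip D σ μc K hσ hK p₀ hp h0 hKb _ i]
      have e : Function.update (Function.update m i (m i + n)) i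
          (Function.update m i (m i + n) i + 1) = Function.update m i (m i + (n + 1)) := by
        funext j
        by_cases h : j = i
        · subst h; simp; ring
        · simp [Function.update_of_ne h]
      rw [e]

lemma fold_pderiv_Ip (k : Fin D → ℕ) (l : List (Fin D)) (m : Fin D → ℕ) :
    l.foldr (fun i g => (pderivG D i)^[k i] g) (Ip D σ μc p₀ m)
      = Ip D σ μc p₀ (fun j => m j + l.count j * k j) := by
  induction l generalizing m with
  | nil => simp
  | cons i l ih =>
      rw [List.foldr_cons, ih, iter_pderiv_Ip D σ μc K hσ hK p₀ hp h0 hKb i (k i)]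
      have e : Function.update (fun j => m j + List.count j l * k j) i
          (m i + List.count i l * k i + k i)
          = fun j => m j + List.count j (i :: l) * k j := by
        funext j
        by_cases h : j = i
        · subst h
          simp only [Function.update_self, List.count_cons_self]
          ring
        · simp [Function.update_of_ne h, List.count_cons_of_ne (Ne.symm h)]
      rw [e]

lemma mderiv_Ip (k : Fin D → ℕ) :
    mderivG D k (Ip D σ μc p₀ 0) = Ip D σ μc p₀ k := by
  rw [mderivG, fold_pderiv_Ip D σ μc K hσ hK p₀ hp h0 hKb k]
  have e : (fun j => (0 : Fin D → ℕ) j + List.count j (List.finRange D) * k j) = k := by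
    funext j
    have hc : List.count j (List.finRange D) = 1 :=
      List.count_eq_one_of_mem (List.nodup_finRange D) (List.mem_finRange j)
    simp [hc]
  rw [e]

end

lemma pderiv_const_mul (D : ℕ) (i : Fin D) (c : ℝ) (f : (Fin D → ℝ) → ℝ) :
    pderivG D i (fun x => c * f x) = fun x => c * pderivG D i f x := by
  funext x
  simp only [pderivG]
  exact deriv_const_mul_field c

lemma mderiv_const_mul (D : ℕ) (k : Fin D → ℕ) (c : ℝ) (f : (Fin D → ℝ) → ℝ) :
    mderivG D k (fun x => c * f x) = fun x => c * mderivG D k f x := by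
  have iter : ∀ (i : Fin D) (n : ℕ) (g : (Fin D → ℝ) → ℝ),
      (pderivG D i)^[n] (fun x => c * g x) = fun x => c * (pderivG D i)^[n] g x := by
    intro i n
    induction n with
    | zero => intro g; rfl
    | succ n ih =>
        intro g
        rw [Function.iterate_succ_apply, pderiv_const_mul, ih, Function.iterate_succ_apply]
  rw [mderivG, mderivG]
  induction (List.finRange D) with
  | nil => rfl
  | cons i l ihl => rw [List.foldr_cons, List.foldr_cons, ihl, iter]

/-! ### Identification of the forward density -/

lemma gaussD_eq (D : ℕ) (σ : ℝ) (z : Fin D → ℝ) :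
    gaussD D σ z = (2 * Real.pi * σ ^ 2) ^ (-(D : ℝ) / 2) * Fm D σ 0 z := by
  rw [gaussD, Fm]
  congr 1
  simp only [Pi.zero_apply, iteratedDeriv_zero]
  rw [show (∏ j, gk1 σ (z j)) = ∏ j, Real.exp (-((σ⁻¹ * z j) ^ 2 / 2)) from rfl,
    ← Real.exp_sum]
  congr 1
  have hterm : ∀ j : Fin D, -((σ⁻¹ * z j) ^ 2 / 2) = -(z j ^ 2 / (2 * σ ^ 2)) := fun j => by
    simp only [mul_pow, div_eq_mul_inv, mul_inv, inv_pow]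
    ring
  calc (-(∑ i, z i ^ 2)) / (2 * σ ^ 2) = ∑ i, -(z i ^ 2 / (2 * σ ^ 2)) := by
        rw [neg_div, Finset.sum_div, ← Finset.sum_neg_distrib]
    _ = ∑ i, -((σ⁻¹ * z i) ^ 2 / 2) := Finset.sum_congr rfl fun j _ => (hterm j).symm

lemma muT_sigmaT_facts (τlo τhi : ℝ) (hτlo : 0 < τlo) (α : ℝ → ℝ)
    (hα : Measurable α) (hab : ∀ t, 0 ≤ t → τlo ≤ α t ∧ α t ≤ τhi) (t : ℝ) (ht : 0 < t) :
    0 < muT α t ∧ muT α t < 1 ∧ 0 < sigmaT α t ∧ sigmaT α t ≤ 1 ∧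
      muT α t ^ 2 + sigmaT α t ^ 2 = 1 := by
  have hInt : IntegrableOn α (Set.Ioc (0:ℝ) t) := by
    apply Measure.integrableOn_of_bounded (M := τhi)
    · simp [Real.volume_Ioc]
    · exact hα.aestronglyMeasurable
    · filter_upwards [ae_restrict_mem measurableSet_Ioc] with s hs
      have h1 := hab s hs.1.le
      rw [Real.norm_eq_abs, abs_of_pos (lt_of_lt_of_le hτlo h1.1)]
      exact h1.2
  have hIpos : 0 < ∫ s in Set.Ioc (0:ℝ) t, α s := by
    have hconst : ∫ _ in Set.Ioc (0:ℝ) t, τlo = τlo * t := by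
      simp [Real.volume_Ioc, ENNReal.toReal_ofReal ht.le, mul_comm, ht.le]
    have hmono : ∫ _ in Set.Ioc (0:ℝ) t, τlo ≤ ∫ s in Set.Ioc (0:ℝ) t, α s := by
      apply setIntegral_mono_on (integrableOn_const (by simp [Real.volume_Ioc]))
        hInt measurableSet_Ioc
      intro s hs
      exact (hab s hs.1.le).1
    nlinarith
  have hμ1 : muT α t < 1 := by
    rw [muT]
    have h2 : -∫ s in Set.Ioc (0:ℝ) t, α s < 0 := by linarith
    calc Real.exp _ < Real.exp 0 := Real.exp_lt_exp.mpr h2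
      _ = 1 := Real.exp_zero
  have hμ0 : 0 < muT α t := Real.exp_pos _
  have hs2 : 0 < 1 - muT α t ^ 2 := by nlinarith
  have hσ0 : 0 < sigmaT α t := Real.sqrt_pos.mpr hs2
  have hσsq : sigmaT α t ^ 2 = 1 - muT α t ^ 2 := Real.sq_sqrt hs2.le
  have hσ1 : sigmaT α t ≤ 1 := by nlinarith
  exact ⟨hμ0, hμ1, hσ0, hσ1, by nlinarith⟩

lemma Cσ_eq (D : ℕ) (σ : ℝ) (hσ : 0 < σ) :
    (2 * Real.pi * σ ^ 2) ^ (-(D : ℝ) / 2)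
      = (2 * Real.pi) ^ (-(D : ℝ) / 2) * (σ⁻¹ : ℝ) ^ D := by
  have h2π : (0:ℝ) ≤ 2 * Real.pi := by positivity
  rw [Real.mul_rpow h2π (sq_nonneg σ)]
  congr 1
  rw [← Real.rpow_natCast σ 2, ← Real.rpow_mul hσ.le]
  rw [show ((2:ℕ):ℝ) * (-(D : ℝ) / 2) = -(D:ℝ) by push_cast; ring]
  rw [Real.rpow_neg hσ.le, Real.rpow_natCast, inv_pow]

lemma Cσ_pos (D : ℕ) (σ : ℝ) (hσ : 0 < σ) :
    (0:ℝ) < (2 * Real.pi * σ ^ 2) ^ (-(D : ℝ) / 2) :=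
  Real.rpow_pos_of_pos (by positivity) _

lemma Cσ_le (D : ℕ) (σ : ℝ) (hσ : 0 < σ) :
    (2 * Real.pi * σ ^ 2) ^ (-(D : ℝ) / 2) ≤ (σ⁻¹ : ℝ) ^ D := by
  rw [Cσ_eq D σ hσ]
  have h1 : (2 * Real.pi) ^ (-(D : ℝ) / 2) ≤ 1 :=
    Real.rpow_le_one_of_one_le_of_nonpos (by nlinarith [Real.pi_gt_three])
      (by have : (0:ℝ) ≤ (D:ℝ) := Nat.cast_nonneg D; linarith)
  have h2 : (0:ℝ) ≤ σ⁻¹ ^ D := by positivity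
  nlinarith [Real.rpow_nonneg (by positivity : (0:ℝ) ≤ 2 * Real.pi) (-(D : ℝ) / 2)]


/-- Lemma A.3 of the paper: bound `|D^k p_t(x)| ≤ C / σ_t^{|k|}`
on the mixed partial derivatives of the marginal density `p_t`. -/
theorem statement_18
    (D : ℕ) (hD : 0 < D) (K τlo τhi : ℝ)
    (hK : 0 < K) (hτlo : 0 < τlo) (hττ : τlo ≤ τhi) (k : Fin D → ℕ) :
    ∃ C : ℝ, 0 < C ∧
      ∀ (p₀ : (Fin D → ℝ) → ℝ) (α : ℝ → ℝ),
        ForwardHyp D τlo τhi α p₀ →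
        (∀ x ∈ cube D, p₀ x ≤ K) →
        ∀ (x : Fin D → ℝ) (t : ℝ), 0 < t →
          |mderivG D k (fwdDen D α p₀ t) x| ≤ C / sigmaT α t ^ (∑ i, k i) := by
  have hBBprod : (0:ℝ) < ∏ j, BB (k j) := Finset.prod_pos fun j _ => BB_pos (k j)
  have hJprod : (0:ℝ) ≤ ∏ j, Jint (k j) := Finset.prod_nonneg fun j _ => Jint_nonneg (k j)
  have hvc : (0:ℝ) ≤ (volume (cube D)).toReal := ENNReal.toReal_nonneg
  set C1 : ℝ := 2 ^ D * (volume (cube D)).toReal * K * (∏ j, BB (k j)) + 1 with hC1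
  set C2 : ℝ := 2 ^ D * K * (∏ j, Jint (k j)) + 1 with hC2
  have hC1pos : 0 < C1 := by
    have : (0:ℝ) ≤ 2 ^ D * (volume (cube D)).toReal * K * (∏ j, BB (k j)) := by positivity
    linarith
  have hC2pos : 0 < C2 := by
    have : (0:ℝ) ≤ 2 ^ D * K * (∏ j, Jint (k j)) := by positivity
    linarith
  refine ⟨max C1 C2, lt_max_of_lt_left hC1pos, ?_⟩
  intro p₀ α hF hbd x t ht
  obtain ⟨hp, h0, hsupp, _hint, hα, hab⟩ := hF
  obtain ⟨hμ0, hμ1, hσ0, hσ1, hpyth⟩ := muT_sigmaT_facts τlo τhi hτlo α hα hab t ht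
  set σ := sigmaT α t with hσdef
  set μ := muT α t with hμdef
  have hKb : ∀ y, p₀ y ≤ K := fun y => by
    by_cases h : y ∈ cube D
    · exact hbd y h
    · rw [hsupp y h]; exact hK.le
  set Cσ : ℝ := (2 * Real.pi * σ ^ 2) ^ (-(D : ℝ) / 2) with hCσdef
  have hfwd : fwdDen D α p₀ t = fun x => Cσ * Ip D σ μ p₀ 0 x := by
    funext z
    rw [fwdDen, Ip, ← MeasureTheory.integral_const_mul]
    refine setIntegral_congr_fun measurableSet_Icc fun y _ => ?_
    rw [gaussD_eq D σ]
    ring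
  have hmd : mderivG D k (fwdDen D α p₀ t) x = Cσ * Ip D σ μ p₀ k x := by
    rw [hfwd, mderiv_const_mul, mderiv_Ip D σ μ K hσ0 hK.le p₀ hp h0 hKb k]
  have hIpabs : (0:ℝ) ≤ |Ip D σ μ p₀ k x| := abs_nonneg _
  have hCσle : Cσ ≤ σ⁻¹ ^ D := Cσ_le D σ hσ0
  have hσinv : (0:ℝ) ≤ σ⁻¹ := inv_nonneg.mpr hσ0.le
  have hgoal : C1 ≤ max C1 C2 := le_max_left _ _
  have hgoal2 : C2 ≤ max C1 C2 := le_max_right _ _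
  have hσpowpos : (0:ℝ) ≤ σ⁻¹ ^ (∑ i, k i) := by positivity
  have hCσpos : 0 < Cσ := Cσ_pos D σ hσ0
  rw [hmd, abs_mul, abs_of_pos hCσpos,
    show max C1 C2 / σ ^ (∑ i, k i) = max C1 C2 * σ⁻¹ ^ (∑ i, k i) by
      rw [div_eq_mul_inv, ← inv_pow]]
  clear_value σ μ C1 C2 Cσ
  clear hfwd hmd hσdef hμdef hCσdef hCσpos
  rcases le_or_gt (1/2 : ℝ) (σ ^ 2) with hcase | hcase
  · -- σ is bounded below
    have hσhalf : (1:ℝ)/2 ≤ σ := by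
      by_contra hcon
      push_neg at hcon
      have h1 : σ * σ < (1/2) * (1/2) := mul_self_lt_mul_self hσ0.le hcon
      rw [← pow_two] at h1
      norm_num at h1
      linarith
    have hinv2 : σ⁻¹ ≤ 2 := by
      have h := inv_anti₀ (by norm_num : (0:ℝ) < 1/2) hσhalf
      norm_num at h
      exact h
    have hpowD : σ⁻¹ ^ D ≤ 2 ^ D := pow_le_pow_left₀ hσinv hinv2 D
    have hbound : |Ip D σ μ p₀ k x|
        ≤ K * (σ⁻¹ ^ (∑ j, k j) * ∏ j, BB (k j)) * (volume (cube D)).toReal := by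
      rw [Ip, ← Real.norm_eq_abs]
      refine norm_setIntegral_le_of_norm_le_const (lt_top_iff_ne_top.mpr (cube_finite D))
        (fun y _ => ?_)
      rw [Real.norm_eq_abs, abs_mul, abs_of_nonneg (h0 y)]
      have h1 := Fm_le D σ hσ0 k (x - μ • y)
      have h2 : 0 ≤ σ⁻¹ ^ (∑ j, k j) * ∏ j, BB (k j) := by positivity
      nlinarith [abs_nonneg (Fm D σ k (x - μ • y)), hKb y, h0 y]
    calc Cσ * |Ip D σ μ p₀ k x|
        ≤ σ⁻¹ ^ D * (K * (σ⁻¹ ^ (∑ j, k j) * ∏ j, BB (k j)) * (volume (cube D)).toReal) :=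
          mul_le_mul hCσle hbound hIpabs (by positivity)
      _ ≤ 2 ^ D * (K * (σ⁻¹ ^ (∑ j, k j) * ∏ j, BB (k j)) * (volume (cube D)).toReal) := by
          refine mul_le_mul_of_nonneg_right hpowD ?_
          positivity
      _ = (2 ^ D * (volume (cube D)).toReal * K * (∏ j, BB (k j))) * σ⁻¹ ^ (∑ i, k i) := by
          ring
      _ ≤ C1 * σ⁻¹ ^ (∑ i, k i) := by
          refine mul_le_mul_of_nonneg_right ?_ hσpowpos
          rw [hC1]; linarith
      _ ≤ max C1 C2 * σ⁻¹ ^ (∑ i, k i) := mul_le_mul_of_nonneg_right hgoal hσpowpos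
  · -- μ is bounded below
    have hμsq : (1:ℝ)/2 ≤ μ ^ 2 := by linarith
    have hμhalf : (1:ℝ)/2 ≤ μ := by
      by_contra hcon
      push_neg at hcon
      have h1 : μ * μ < (1/2) * (1/2) := mul_self_lt_mul_self hμ0.le hcon
      rw [← pow_two] at h1
      norm_num at h1
      linarith
    have hμinv2 : μ⁻¹ ≤ 2 := by
      have h := inv_anti₀ (by norm_num : (0:ℝ) < 1/2) hμhalf
      norm_num at h
      exact h
    set f : Fin D → ℝ → ℝ := fun j u => |iteratedDeriv (k j) (gk1 σ) (x j - μ * u)| with hf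
    have hfj_int : ∀ j, Integrable (f j) := fun j =>
      int_affine_integrable _ (integrable_iD_gk1 σ hσ0 (k j)) (x j) μ hμ0.ne'
    have hg_int : Integrable (fun y : Fin D → ℝ => ∏ j, f j (y j)) :=
      Integrable.fintype_prod hfj_int
    have habs : ∀ y : Fin D → ℝ, |Fm D σ k (x - μ • y)| = ∏ j, f j (y j) := by
      intro y
      rw [Fm, Finset.abs_prod]
      exact Finset.prod_congr rfl fun j _ => by
        simp [hf, Pi.sub_apply, Pi.smul_apply, smul_eq_mul]
    have step1 : |Ip D σ μ p₀ k x| ≤ ∫ y in cube D, K * ∏ j, f j (y j) := by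
      calc |Ip D σ μ p₀ k x| ≤ ∫ y in cube D, |p₀ y * Fm D σ k (x - μ • y)| := by
            rw [Ip, ← Real.norm_eq_abs]
            exact (norm_integral_le_integral_norm _).trans (le_of_eq (by
              simp [Real.norm_eq_abs, abs_mul]))
        _ ≤ ∫ y in cube D, K * ∏ j, f j (y j) := by
            refine setIntegral_mono_on
              ((integrableOn_Ip D σ μ K hσ0 p₀ hp h0 hKb k x).abs)
              ((hg_int.const_mul K).integrableOn) measurableSet_Icc fun y _ => ?_
            rw [abs_mul, abs_of_nonneg (h0 y), ← habs y]
            exact mul_le_mul_of_nonneg_right (hKb y) (abs_nonneg _)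
    have step2 : ∫ y in cube D, K * ∏ j, f j (y j) ≤ K * ∫ y : Fin D → ℝ, ∏ j, f j (y j) := by
      rw [MeasureTheory.integral_const_mul]
      refine mul_le_mul_of_nonneg_left ?_ hK.le
      exact setIntegral_le_integral hg_int (Filter.Eventually.of_forall fun y =>
        Finset.prod_nonneg fun j _ => abs_nonneg _)
    have step3 : ∫ y : Fin D → ℝ, ∏ j, f j (y j)
        = ∏ j, (μ⁻¹ * (σ⁻¹ ^ (k j) * σ * Jint (k j))) := by
      rw [MeasureTheory.integral_fintype_prod_volume_eq_prod f]
      refine Finset.prod_congr rfl fun j _ => ?_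
      rw [hf]
      rw [int_affine (fun s => |iteratedDeriv (k j) (gk1 σ) s|) (x j) μ,
        int_iD_gk1 σ hσ0 (k j), abs_of_pos (inv_pos.mpr hμ0)]
    have step4 : ∏ j, (μ⁻¹ * (σ⁻¹ ^ (k j) * σ * Jint (k j)))
        = (μ⁻¹ * σ) ^ D * (σ⁻¹ ^ (∑ i, k i) * ∏ j, Jint (k j)) := by
      calc ∏ j, (μ⁻¹ * (σ⁻¹ ^ (k j) * σ * Jint (k j)))
          = ∏ j, ((μ⁻¹ * σ) * (σ⁻¹ ^ (k j) * Jint (k j))) :=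
            Finset.prod_congr rfl fun j _ => by ring
        _ = (μ⁻¹ * σ) ^ D * ∏ j, (σ⁻¹ ^ (k j) * Jint (k j)) := by
            rw [Finset.prod_mul_distrib, Finset.prod_const, Finset.card_univ, Fintype.card_fin]
        _ = (μ⁻¹ * σ) ^ D * ((∏ j, σ⁻¹ ^ (k j)) * ∏ j, Jint (k j)) := by
            rw [Finset.prod_mul_distrib]
        _ = (μ⁻¹ * σ) ^ D * (σ⁻¹ ^ (∑ i, k i) * ∏ j, Jint (k j)) := by
            rw [← Finset.prod_pow_eq_pow_sum]
    have hA : |Ip D σ μ p₀ k x|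
        ≤ K * ((μ⁻¹ * σ) ^ D * (σ⁻¹ ^ (∑ i, k i) * ∏ j, Jint (k j))) := by
      calc |Ip D σ μ p₀ k x| ≤ ∫ y in cube D, K * ∏ j, f j (y j) := step1
        _ ≤ K * ∫ y : Fin D → ℝ, ∏ j, f j (y j) := step2
        _ = K * ((μ⁻¹ * σ) ^ D * (σ⁻¹ ^ (∑ i, k i) * ∏ j, Jint (k j))) := by
            rw [step3, step4]
    have hμσpos : (0:ℝ) ≤ (μ⁻¹ * σ) ^ D := by positivity
    calc Cσ * |Ip D σ μ p₀ k x|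
        ≤ σ⁻¹ ^ D * (K * ((μ⁻¹ * σ) ^ D * (σ⁻¹ ^ (∑ i, k i) * ∏ j, Jint (k j)))) :=
          mul_le_mul hCσle hA hIpabs (by positivity)
      _ = (K * (∏ j, Jint (k j)) * σ⁻¹ ^ (∑ i, k i)) * (σ⁻¹ * σ) ^ D * μ⁻¹ ^ D := by
          rw [mul_pow, mul_pow]
          ring
      _ = (K * (∏ j, Jint (k j)) * σ⁻¹ ^ (∑ i, k i)) * μ⁻¹ ^ D := by
          rw [inv_mul_cancel₀ hσ0.ne', one_pow, mul_one]
      _ ≤ (K * (∏ j, Jint (k j)) * σ⁻¹ ^ (∑ i, k i)) * 2 ^ D := by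
          refine mul_le_mul_of_nonneg_left
            (pow_le_pow_left₀ (inv_nonneg.mpr hμ0.le) hμinv2 D) ?_
          positivity
      _ = (2 ^ D * K * (∏ j, Jint (k j))) * σ⁻¹ ^ (∑ i, k i) := by ring
      _ ≤ C2 * σ⁻¹ ^ (∑ i, k i) := by
          refine mul_le_mul_of_nonneg_right ?_ hσpowpos
          rw [hC2]; linarith
      _ ≤ max C1 C2 * σ⁻¹ ^ (∑ i, k i) := mul_le_mul_of_nonneg_right hgoal2 hσpowpos

end DMpaper

end
end
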